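/- arXiv:1810.11759 — 3 statements merged into one kernel-verified Lean document; each statement's English description precedes it below -/
import Mathlib

section
/- Let N ≥ 1 be an integer, let ν be a nonzero finite Borel measure on ℝ^N, and let θ ∈ (0,1). Assume that ν(Ω)^θ · ν(ℝ^N)^{1-θ} ≤ ν(Ω) for every open set Ω ⊆ ℝ^N. Then ν is concentrated at a single point: there exists z ∈ ℝ^N such that ν = ν(ℝ^N) · δ_z, where δ_z is the Dirac measure at z. -/
open MeasureTheory ENNReal Real Filter Topology

noncomputable section

/-- Let `ν` be a nonzero finite Borel measure on `ℝ^N` and `θ ∈ (0,1)`. If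
`ν(Ω)^θ · ν(ℝ^N)^{1-θ} ≤ ν(Ω)` for every open set `Ω`, then `ν` is concentrated at a single
point: `ν = ν(ℝ^N) · δ_z` for some `z ∈ ℝ^N`. -/
theorem measure_concentrated_at_point
    (N : ℕ) (hN : 1 ≤ N)
    (ν : Measure (EuclideanSpace ℝ (Fin N))) [IsFiniteMeasure ν] (hν : ν ≠ 0)
    (θ : ℝ) (hθ0 : 0 < θ) (hθ1 : θ < 1)
    (h : ∀ Ω : Set (EuclideanSpace ℝ (Fin N)), IsOpen Ω →
      ν Ω ^ θ * ν Set.univ ^ (1 - θ) ≤ ν Ω) :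
    ∃ z : EuclideanSpace ℝ (Fin N), ν = ν Set.univ • Measure.dirac z := by
  have hνuniv : ν Set.univ ≠ 0 := by
    simpa [Measure.measure_univ_eq_zero] using hν
  have hνtop : ν Set.univ ≠ ∞ := measure_ne_top ν _
  -- dichotomy for open sets
  have dich : ∀ Ω : Set (EuclideanSpace ℝ (Fin N)), IsOpen Ω →
      ν Ω = 0 ∨ ν Ω = ν Set.univ := by
    intro Ω hΩ
    by_contra hcon
    push_neg at hcon
    obtain ⟨h0, huniv⟩ := hcon
    have hlt : ν Ω < ν Set.univ := lt_of_le_of_ne (measure_mono (Set.subset_univ _)) huniv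
    have hΩtop : ν Ω ≠ ∞ := measure_ne_top ν _
    have key : ν Ω < ν Ω ^ θ * ν Set.univ ^ (1 - θ) := by
      have h1 : ν Ω ^ (1 - θ) < ν Set.univ ^ (1 - θ) :=
        ENNReal.rpow_lt_rpow hlt (by linarith)
      have h2 : ν Ω ^ θ * ν Ω ^ (1 - θ) < ν Ω ^ θ * ν Set.univ ^ (1 - θ) := by
        rw [ENNReal.mul_lt_mul_iff_right (by simp [ENNReal.rpow_eq_zero_iff, h0, hθ0, hθ0.ne'])
          (by simp [ENNReal.rpow_eq_top_iff, hΩtop, h0, hθ0])]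
        exact h1
      calc ν Ω = ν Ω ^ (θ + (1 - θ)) := by norm_num
        _ = ν Ω ^ θ * ν Ω ^ (1 - θ) := ENNReal.rpow_add _ _ h0 hΩtop
        _ < _ := h2
    exact absurd (h Ω hΩ) (not_le.mpr key)
  -- the union of all null open sets is null
  set S : Set (Set (EuclideanSpace ℝ (Fin N))) := {U | IsOpen U ∧ ν U = 0} with hS
  obtain ⟨T, hTS, hTc, hTU⟩ := TopologicalSpace.isOpen_sUnion_countable S (fun U hU => hU.1)
  have hW0 : ν (⋃₀ S) = 0 := by
    rw [← hTU]
    exact (measure_sUnion_null_iff hTS).2 fun U hU => (hTc hU).2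
  have hWne : ⋃₀ S ≠ Set.univ := by
    intro hcon
    rw [hcon] at hW0
    exact hνuniv hW0
  obtain ⟨z, hz⟩ : ∃ z, z ∉ ⋃₀ S := by
    by_contra hc
    push_neg at hc
    exact hWne (Set.eq_univ_of_forall hc)
  -- every open nbhd of z has full measure
  have hfull : ∀ U : Set (EuclideanSpace ℝ (Fin N)), IsOpen U → z ∈ U → ν U = ν Set.univ := by
    intro U hU hzU
    rcases dich U hU with h0 | h1
    · exact absurd ⟨U, ⟨hU, h0⟩, hzU⟩ hz
    · exact h1
  -- ν {z}ᶜ = 0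
  have hcompl : ν {z}ᶜ = 0 := by
    have hsub : {z}ᶜ ⊆ ⋃ n : ℕ, (Metric.ball z (1 / (n + 1)))ᶜ := by
      intro x hx
      have hd : 0 < dist x z := dist_pos.2 (by simpa using hx)
      obtain ⟨n, hn⟩ := exists_nat_one_div_lt hd
      exact Set.mem_iUnion.2 ⟨n, by simp only [Set.mem_compl_iff, Metric.mem_ball, not_lt]; linarith [hn.le]⟩
    refine measure_mono_null hsub (measure_iUnion_null fun n => ?_)
    have hb : ν (Metric.ball z (1 / (n + 1))) = ν Set.univ :=
      hfull _ Metric.isOpen_ball (Metric.mem_ball_self (by positivity))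
    rw [measure_compl measurableSet_ball (measure_ne_top ν _), hb,
      tsub_self]
  -- conclude
  refine ⟨z, Measure.ext fun s hs => ?_⟩
  rw [Measure.smul_apply, Measure.dirac_apply' z hs, smul_eq_mul]
  by_cases hzs : z ∈ s
  · have hsc : ν sᶜ = 0 := measure_mono_null (by simpa using hzs : sᶜ ⊆ {z}ᶜ) hcompl
    have := measure_add_measure_compl hs (μ := ν)
    rw [hsc, add_zero] at this
    simp [this, Set.indicator_of_mem hzs]
  · have : ν s = 0 := measure_mono_null (by simpa [Set.subset_compl_singleton_iff] using hzs) hcompl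
    simp [this, Set.indicator_of_notMem hzs]
end
end

section
/- Assume N ≥ 3 is an integer, α ≥ 0, 0 < μ < N, 0 < μ + 2α ≤ min{4, N}, and set q = 2*_{α,μ} := (2N-2α-μ)/(N-2). Let u : ℝ^N → ℝ be a nonnegative measurable function which is radially symmetric and radially nonincreasing (i.e. u(x) = U(|x|) for a nonincreasing function U : (0,∞) → [0,∞)), and assume ∫_{ℝ^N} ∫_{ℝ^N} u(x)^q u(y)^q / (|x|^α |x-y|^μ |y|^α) dx dy = 1. Then for every x ≠ 0, u(x) ≤ [ (N-α)^2 2^μ / ω_{N-1}^2 ]^{1/(2q)} · |x|^{-(N-2)/2}, where ω_{N-1} is the surface area of the unit sphere in ℝ^N. -/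
open MeasureTheory ENNReal Real Filter Topology

noncomputable section

section AuxLemmas

open MeasureTheory Metric Set Real

variable {E : Type*} [NormedAddCommGroup E] [NormedSpace ℝ E] [MeasurableSpace E] [BorelSpace E]
  [FiniteDimensional ℝ E] [Nontrivial E]

lemma aux_integrableOn_norm_rpow (μ : Measure E) [μ.IsAddHaarMeasure] (β R : ℝ) (hβ0 : 0 ≤ β)
    (hβ : β < (Module.finrank ℝ E : ℝ)) (hR : 0 < R) :
    IntegrableOn (fun y : E => ‖y‖ ^ (-β)) (closedBall (0 : E) R) μ := by
  set N := Module.finrank ℝ E with hNdef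
  have hmes : Measurable (fun y : E => ‖y‖ ^ (-β)) :=
    Measurable.pow (measurable_norm : Measurable (fun y : E => ‖y‖)) measurable_const
  refine ⟨hmes.aestronglyMeasurable, ?_⟩
  rw [hasFiniteIntegral_iff_norm]
  set A : ℕ → Set E := fun k => closedBall 0 (R * (1/2) ^ k) \ closedBall 0 (R * (1/2) ^ (k+1))
    with hA
  have hsub : closedBall (0:E) R \ {0} ⊆ ⋃ k, A k := by
    intro y hy
    obtain ⟨hy1, hy2⟩ := hy
    have hy0 : 0 < ‖y‖ := by
      simpa [norm_pos_iff] using hy2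
    have hyR : ‖y‖ ≤ R := by simpa using hy1
    have hex : ∃ n : ℕ, R * (1/2) ^ n < ‖y‖ := by
      obtain ⟨n, hn⟩ := exists_pow_lt_of_lt_one (x := ‖y‖ / R) (y := (1/2 : ℝ))
        (div_pos hy0 hR) (by norm_num)
      exact ⟨n, by rwa [lt_div_iff₀ hR, mul_comm] at hn⟩
    classical
    have hnspec : R * (1/2) ^ (Nat.find hex) < ‖y‖ := Nat.find_spec hex
    have hn0 : Nat.find hex ≠ 0 := by
      intro h
      rw [h] at hnspec
      simp at hnspec
      linarith
    obtain ⟨k, hk⟩ := Nat.exists_eq_succ_of_ne_zero hn0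
    have hmin : ¬ (R * (1/2) ^ k < ‖y‖) := Nat.find_min hex (by omega)
    rw [hk] at hnspec
    refine mem_iUnion.2 ⟨k, ?_, ?_⟩
    · simpa using not_lt.1 hmin
    · simpa using not_le.2 hnspec
  have hnull : μ {(0:E)} = 0 := measure_singleton 0
  have hnull2 : μ (closedBall (0:E) R ∩ {0}) = 0 :=
    measure_mono_null inter_subset_right hnull
  have hres : ∫⁻ y in closedBall (0:E) R, ENNReal.ofReal ‖‖y‖ ^ (-β)‖ ∂μ
      = ∫⁻ y in closedBall (0:E) R \ {0}, ENNReal.ofReal ‖‖y‖ ^ (-β)‖ ∂μ := by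
    rw [Measure.restrict_congr_set (diff_ae_eq_self.2 hnull2)]
  rw [hres]
  have hbound : ∀ k, ∫⁻ y in A k, ENNReal.ofReal ‖‖y‖ ^ (-β)‖ ∂μ
      ≤ ENNReal.ofReal ((R * (1/2) ^ (k+1)) ^ (-β)) * μ (closedBall (0:E) (R * (1/2)^k)) := by
    intro k
    have hrk : (0:ℝ) < R * (1/2) ^ (k+1) := by positivity
    have h1 : ∀ y ∈ A k, ENNReal.ofReal ‖‖y‖ ^ (-β)‖ ≤
        ENNReal.ofReal ((R * (1/2) ^ (k+1)) ^ (-β)) := by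
      intro y hy
      obtain ⟨hy1, hy2⟩ := hy
      have h2 : R * (1/2) ^ (k+1) ≤ ‖y‖ := by
        by_contra h
        exact hy2 (by simpa using (not_le.1 h).le)
      apply ENNReal.ofReal_le_ofReal
      rw [Real.norm_eq_abs, abs_of_nonneg (rpow_nonneg (norm_nonneg y) _)]
      exact rpow_le_rpow_of_nonpos hrk h2 (by linarith)
    calc ∫⁻ y in A k, ENNReal.ofReal ‖‖y‖ ^ (-β)‖ ∂μ
        ≤ ∫⁻ _ in A k, ENNReal.ofReal ((R * (1/2) ^ (k+1)) ^ (-β)) ∂μ :=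
          setLIntegral_mono' ((measurableSet_closedBall).diff (measurableSet_closedBall)) h1
      _ = ENNReal.ofReal ((R * (1/2) ^ (k+1)) ^ (-β)) * μ (A k) := by
          rw [setLIntegral_const]
      _ ≤ _ := by
          gcongr
          exact diff_subset
  calc ∫⁻ y in closedBall (0:E) R \ {0}, ENNReal.ofReal ‖‖y‖ ^ (-β)‖ ∂μ
      ≤ ∫⁻ y in ⋃ k, A k, ENNReal.ofReal ‖‖y‖ ^ (-β)‖ ∂μ := lintegral_mono_set hsub
    _ ≤ ∑' k, ∫⁻ y in A k, ENNReal.ofReal ‖‖y‖ ^ (-β)‖ ∂μ := lintegral_iUnion_le _ _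
    _ ≤ ∑' k, ENNReal.ofReal ((R * (1/2) ^ (k+1)) ^ (-β)) * μ (closedBall (0:E) (R * (1/2)^k))
        := ENNReal.tsum_le_tsum hbound
    _ < ⊤ := by
      have hvol : ∀ k : ℕ, μ (closedBall (0:E) (R * (1/2)^k))
          = ENNReal.ofReal ((R * (1/2)^k) ^ N) * μ (ball (0:E) 1) := by
        intro k
        rw [Measure.addHaar_closedBall _ _ (by positivity)]
      have key : ∀ k : ℕ, ENNReal.ofReal ((R * (1/2) ^ (k+1)) ^ (-β)) *
          μ (closedBall (0:E) (R * (1/2)^k))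
          = (ENNReal.ofReal (2 ^ β * R ^ ((N:ℝ) - β)) * μ (ball (0:E) 1)) *
            (ENNReal.ofReal ((1/2 : ℝ) ^ ((N:ℝ) - β))) ^ k := by
        intro k
        rw [hvol k]
        have hhalf : (0:ℝ) ≤ (1/2:ℝ) := by norm_num
        have e1 : (R * (1/2) ^ (k+1)) ^ (-β) * (R * (1/2)^k) ^ (N:ℕ)
            = 2 ^ β * R ^ ((N:ℝ) - β) * ((1/2 : ℝ) ^ ((N:ℝ) - β)) ^ k := by
          have hRk : (0:ℝ) < R * (1/2)^k := by positivity
          have l0 : ((R * (1/2)^k) ^ (N:ℕ) : ℝ) = (R * (1/2)^k) ^ ((N:ℕ):ℝ) := by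
            rw [Real.rpow_natCast]
          have l1 : (R * (1/2) ^ (k+1) : ℝ) = (R * (1/2)^k) * (1/2) := by ring
          rw [l0, l1, Real.mul_rpow hRk.le hhalf, Real.mul_rpow hR.le (by positivity),
            Real.mul_rpow hR.le (by positivity)]
          have l2 : ((1/2:ℝ)^k) ^ (-β) = ((1/2:ℝ) ^ (-β)) ^ k := by
            rw [← Real.rpow_natCast ((1/2:ℝ)) k, ← Real.rpow_mul hhalf, mul_comm,
              Real.rpow_mul hhalf, Real.rpow_natCast]
          have l3 : ((1/2:ℝ)^k) ^ ((N:ℝ)) = ((1/2:ℝ) ^ ((N:ℝ))) ^ k := by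
            rw [← Real.rpow_natCast ((1/2:ℝ)) k, ← Real.rpow_mul hhalf, mul_comm,
              Real.rpow_mul hhalf, Real.rpow_natCast]
          rw [l2, l3]
          have l5 : (2:ℝ) ^ β = ((1/2:ℝ) ^ β)⁻¹ := by
            rw [one_div, Real.inv_rpow (by norm_num : (0:ℝ) ≤ 2), inv_inv]
          rw [Real.rpow_sub hR, Real.rpow_sub (by norm_num : (0:ℝ) < 1/2),
            Real.rpow_neg hR.le, Real.rpow_neg hhalf, l5, div_pow]
          have h2β : (0:ℝ) < (1/2:ℝ) ^ β := by positivity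
          have hRN : (0:ℝ) < R ^ ((N:ℕ):ℝ) := by positivity
          have hRβ : (0:ℝ) < R ^ β := by positivity
          have hhN : (0:ℝ) < (1/2:ℝ) ^ ((N:ℕ):ℝ) := by positivity
          field_simp
          ring_nf
          rw [← mul_pow, mul_inv_cancel₀ h2β.ne', one_pow]
        calc ENNReal.ofReal ((R * (1/2) ^ (k+1)) ^ (-β)) *
            (ENNReal.ofReal ((R * (1/2)^k) ^ N) * μ (ball 0 1))
            = ENNReal.ofReal ((R * (1/2) ^ (k+1)) ^ (-β) * (R * (1/2)^k) ^ N) * μ (ball 0 1) := by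
              rw [ENNReal.ofReal_mul (by positivity)]; ring
          _ = ENNReal.ofReal (2 ^ β * R ^ ((N:ℝ) - β) * ((1/2 : ℝ) ^ ((N:ℝ) - β)) ^ k)
              * μ (ball 0 1) := by rw [e1]
          _ = _ := by
              rw [ENNReal.ofReal_mul (by positivity), ENNReal.ofReal_pow (by positivity)]
              ring
      simp_rw [key]
      rw [ENNReal.tsum_mul_left, ENNReal.tsum_geometric]
      apply ENNReal.mul_lt_top (ENNReal.mul_lt_top ENNReal.ofReal_lt_top measure_ball_lt_top)
      rw [ENNReal.inv_lt_top]
      apply tsub_pos_iff_lt.2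
      exact ENNReal.ofReal_lt_one.2 (Real.rpow_lt_one (by norm_num) (by norm_num) (by linarith))

lemma aux_setIntegral_norm_rpow (μ : Measure E) [μ.IsAddHaarMeasure] (β R : ℝ) (hβ0 : 0 ≤ β)
    (hβ : β < (Module.finrank ℝ E : ℝ)) (hR : 0 < R) :
    ∫ y in closedBall (0 : E) R, ‖y‖ ^ (-β) ∂μ
      = ((Module.finrank ℝ E : ℝ) * (μ (ball (0:E) 1)).toReal) * R ^ ((Module.finrank ℝ E : ℝ) - β)
        / ((Module.finrank ℝ E : ℝ) - β) := by
  set N := Module.finrank ℝ E with hNdef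
  have hN1 : 1 ≤ N := Module.finrank_pos
  set f : ℝ → ℝ := Set.indicator (Ioc 0 R) (fun r => r ^ (-β)) with hf
  have h1 : ∫ y in closedBall (0:E) R, ‖y‖ ^ (-β) ∂μ = ∫ y, f ‖y‖ ∂μ := by
    rw [← integral_indicator measurableSet_closedBall]
    apply integral_congr_ae
    have hae : ∀ᵐ y ∂μ, y ≠ (0:E) := by
      rw [ae_iff]
      simpa using measure_singleton (0:E)
    filter_upwards [hae] with y hy
    have hy0 : 0 < ‖y‖ := norm_pos_iff.2 hy
    by_cases hyR : ‖y‖ ≤ R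
    · rw [Set.indicator_of_mem (by simpa using hyR), hf,
        Set.indicator_of_mem (by exact ⟨hy0, hyR⟩)]
    · rw [Set.indicator_of_notMem (by simpa using hyR), hf,
        Set.indicator_of_notMem (by simp [hyR])]
  rw [h1, integral_fun_norm_addHaar μ f]
  have h2 : ∫ r in Ioi (0:ℝ), r ^ (N - 1) • f r
      = ∫ r in Ioc (0:ℝ) R, r ^ ((N:ℝ) - 1 - β) := by
    rw [hf]
    have : ∀ r : ℝ, r ^ (N-1) • Set.indicator (Ioc 0 R) (fun s => s ^ (-β)) r
        = Set.indicator (Ioc 0 R) (fun s => s ^ (N-1) * s ^ (-β)) r := by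
      intro r
      by_cases h : r ∈ Ioc 0 R <;>
        simp [Set.indicator_of_mem, Set.indicator_of_notMem, h, smul_eq_mul]
    simp_rw [this]
    rw [integral_indicator measurableSet_Ioc, Measure.restrict_restrict measurableSet_Ioc]
    rw [Set.inter_eq_self_of_subset_left Ioc_subset_Ioi_self]
    apply setIntegral_congr_fun measurableSet_Ioc
    intro r hr
    have hr0 : 0 < r := hr.1
    show r ^ (N-1) * r ^ (-β) = _
    rw [← Real.rpow_natCast r (N-1), ← Real.rpow_add hr0]
    congr 1
    have : ((N - 1 : ℕ) : ℝ) = (N:ℝ) - 1 := by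
      have := Nat.cast_sub hN1 (R := ℝ)
      simpa using this
    rw [this]
    ring
  rw [h2]
  have h3 : ∫ r in Ioc (0:ℝ) R, r ^ ((N:ℝ) - 1 - β) = R ^ ((N:ℝ) - β) / ((N:ℝ) - β) := by
    rw [← intervalIntegral.integral_of_le hR.le, integral_rpow (Or.inl (by
      push_cast; linarith))]
    rw [Real.zero_rpow (by push_cast; intro h; linarith [h] )]
    ring_nf
  rw [h3, nsmul_eq_mul, smul_eq_mul]
  simp only [measureReal_def, ← hNdef]
  ring

lemma aux_integrableOn_norm_sub_rpow (μ : Measure E) [μ.IsAddHaarMeasure] (β R : ℝ)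
    (hβ0 : 0 ≤ β) (hβ : β < (Module.finrank ℝ E : ℝ)) (hR : 0 < R) (x : E) :
    IntegrableOn (fun y : E => ‖x - y‖ ^ (-β)) (ball x R) μ := by
  have base := aux_integrableOn_norm_rpow μ β R hβ0 hβ hR
  have h1 : Integrable ((closedBall (0:E) R).indicator fun y => ‖y‖ ^ (-β)) μ :=
    (integrable_indicator_iff measurableSet_closedBall).2 base
  have h2 := h1.comp_sub_right x
  have h3 : (fun t => ((closedBall (0:E) R).indicator fun y => ‖y‖ ^ (-β)) (t - x))
      = (closedBall x R).indicator (fun y => ‖y - x‖ ^ (-β)) := by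
    funext t
    by_cases ht : t ∈ closedBall x R
    · have ht' : t - x ∈ closedBall (0:E) R := by
        simpa [dist_eq_norm] using ht
      rw [Set.indicator_of_mem ht', Set.indicator_of_mem ht]
    · have ht' : t - x ∉ closedBall (0:E) R := by
        intro h
        exact ht (by simpa [dist_eq_norm] using h)
      rw [Set.indicator_of_notMem ht', Set.indicator_of_notMem ht]
  rw [h3] at h2
  have h4 : IntegrableOn (fun y : E => ‖y - x‖ ^ (-β)) (closedBall x R) μ :=
    (integrable_indicator_iff measurableSet_closedBall).1 h2
  have h5 : IntegrableOn (fun y : E => ‖x - y‖ ^ (-β)) (closedBall x R) μ := by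
    have : (fun y : E => ‖x - y‖ ^ (-β)) = (fun y : E => ‖y - x‖ ^ (-β)) := by
      funext y; rw [norm_sub_rev]
    rw [this]
    exact h4
  exact h5.mono_set ball_subset_closedBall

end AuxLemmas

open Metric Set

set_option maxHeartbeats 1000000

/-- **Decay estimate for radial nonincreasing functions with unit weighted HLS energy.**
Assume `N ≥ 3`, `α ≥ 0`, `0 < μ < N`, `0 < μ + 2α ≤ min{4,N}`, `q = (2N-2α-μ)/(N-2)`. If
`u ≥ 0` is measurable, radially symmetric and radially nonincreasing, and
`∫∫ u(x)^q u(y)^q/(|x|^α |x-y|^μ |y|^α) dx dy = 1`, then for every `x ≠ 0`,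
`u(x) ≤ [(N-α)^2 2^μ / ω_{N-1}^2]^{1/(2q)} |x|^{-(N-2)/2}`, where `ω_{N-1}` is the surface
area of the unit sphere in `ℝ^N`. -/
theorem decay_estimate_radial
    (N : ℕ) (hN : 3 ≤ N) (α μ : ℝ)
    (hα : 0 ≤ α) (hμ0 : 0 < μ) (hμN : μ < (N : ℝ))
    (h2αμ0 : 0 < μ + 2 * α) (h2αμ4 : μ + 2 * α ≤ min 4 (N : ℝ))
    (q : ℝ) (hq : q = (2 * N - 2 * α - μ) / ((N : ℝ) - 2))
    (u : EuclideanSpace ℝ (Fin N) → ℝ)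
    (hum : Measurable u) (hupos : ∀ x, 0 ≤ u x)
    (U : ℝ → ℝ)
    (hU0 : ∀ r : ℝ, 0 < r → 0 ≤ U r)
    (hUmono : ∀ r s : ℝ, 0 < r → r ≤ s → U s ≤ U r)
    (hrad : ∀ x : EuclideanSpace ℝ (Fin N), x ≠ 0 → u x = U ‖x‖)
    (hnorm : (∫ x, ∫ y, u x ^ q * u y ^ q / (‖x‖ ^ α * ‖x - y‖ ^ μ * ‖y‖ ^ α)) = 1)
    -- `ω` is the surface area of the unit sphere in `ℝ^N`
    (ω : ℝ)
    (hω : ω = (((volume : Measure (EuclideanSpace ℝ (Fin N))).toSphere)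
      (Set.univ : Set (Metric.sphere (0 : EuclideanSpace ℝ (Fin N)) 1))).toReal) :
    ∀ x : EuclideanSpace ℝ (Fin N), x ≠ 0 →
      u x ≤ (((N : ℝ) - α) ^ (2 : ℕ) * 2 ^ μ / ω ^ (2 : ℕ)) ^ (1 / (2 * q)) *
        ‖x‖ ^ (-(((N : ℝ) - 2) / 2)) := by
  intro x₀ hx₀
  haveI : Nontrivial (EuclideanSpace ℝ (Fin N)) := by
    have : Module.finrank ℝ (EuclideanSpace ℝ (Fin N)) = N := finrank_euclideanSpace_fin
    exact Module.nontrivial_of_finrank_pos (R := ℝ) (by rw [this]; omega)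
  have hfin : (Module.finrank ℝ (EuclideanSpace ℝ (Fin N)) : ℝ) = (N : ℝ) := by
    rw [finrank_euclideanSpace_fin]
  -- numeric facts
  have hN3 : (3:ℝ) ≤ (N:ℝ) := by exact_mod_cast hN
  have hN2 : (0:ℝ) < (N:ℝ) - 2 := by linarith
  have h4 : μ + 2*α ≤ 4 := h2αμ4.trans (min_le_left _ _)
  have hN' : μ + 2*α ≤ (N:ℝ) := h2αμ4.trans (min_le_right _ _)
  have hP : (0:ℝ) < 2*(N:ℝ) - 2*α - μ := by linarith
  have hqpos : 0 < q := by rw [hq]; exact div_pos hP hN2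
  have hαN : α < (N:ℝ) := by linarith
  set R := ‖x₀‖ with hRdef
  have hR : 0 < R := norm_pos_iff.2 hx₀
  -- ω
  have hωval : ω = (N:ℝ) * (volume (ball (0:EuclideanSpace ℝ (Fin N)) 1)).toReal := by
    rw [hω, Measure.toSphere_apply_univ, finrank_euclideanSpace_fin, ENNReal.toReal_mul]
    simp
  have hvol0 : 0 < (volume (ball (0:EuclideanSpace ℝ (Fin N)) 1)).toReal :=
    ENNReal.toReal_pos (measure_ball_pos _ _ one_pos).ne' measure_ball_lt_top.ne
  have hω0 : 0 < ω := by
    rw [hωval]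
    have : (0:ℝ) < (N:ℝ) := by linarith
    positivity
  -- setup
  set g : EuclideanSpace ℝ (Fin N) → EuclideanSpace ℝ (Fin N) → ℝ :=
    fun x y => u x ^ q * u y ^ q / (‖x‖ ^ α * ‖x - y‖ ^ μ * ‖y‖ ^ α) with hgdef
  set F : EuclideanSpace ℝ (Fin N) → ℝ := fun x => ∫ y, g x y with hFdef
  have hnorm' : ∫ x, F x = 1 := by simp only [hFdef, hgdef]; exact hnorm
  have hgnonneg : ∀ x y, 0 ≤ g x y := by
    intro x y
    simp only [hgdef]
    have h1 : 0 ≤ u x ^ q := rpow_nonneg (hupos x) q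
    have h2 : 0 ≤ u y ^ q := rpow_nonneg (hupos y) q
    have h3 : 0 ≤ ‖x‖ ^ α := rpow_nonneg (norm_nonneg _) α
    have h4 : 0 ≤ ‖x - y‖ ^ μ := rpow_nonneg (norm_nonneg _) μ
    have h5 : 0 ≤ ‖y‖ ^ α := rpow_nonneg (norm_nonneg _) α
    positivity
  have hFnonneg : ∀ x, 0 ≤ F x := fun x => integral_nonneg (hgnonneg x)
  have hFint : Integrable F := by
    by_contra h
    rw [integral_undef h] at hnorm'
    norm_num at hnorm'
  have aene : ∀ z : EuclideanSpace ℝ (Fin N), ∀ᵐ y : EuclideanSpace ℝ (Fin N) ∂volume, y ≠ z := by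
    intro z
    rw [ae_iff]
    simp only [ne_eq, not_not, setOf_eq_eq_singleton]
    exact measure_singleton z
  -- a point with positive value and integrable slice
  have hx₁ex : ∃ x₁ : EuclideanSpace ℝ (Fin N), x₁ ≠ 0 ∧ 0 < F x₁ := by
    by_contra h
    push_neg at h
    have h1 : ∀ᵐ x : EuclideanSpace ℝ (Fin N) ∂volume, F x ≤ 0 := by
      filter_upwards [aene 0] with x hx
      exact h x hx
    have := integral_nonpos_of_ae h1
    rw [hnorm'] at this
    linarith
  obtain ⟨x₁, hx₁0, hx₁F⟩ := hx₁ex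
  have hsplit : ∀ x y : EuclideanSpace ℝ (Fin N),
      g x y = (u x ^ q / ‖x‖ ^ α) * (u y ^ q / (‖x - y‖ ^ μ * ‖y‖ ^ α)) := by
    intro x y
    simp only [hgdef]
    rw [div_mul_div_comm, ← mul_assoc]
  have hgx₁ : Integrable (fun y => g x₁ y) := by
    by_contra h
    have : F x₁ = 0 := integral_undef h
    rw [this] at hx₁F
    linarith
  have hux₁ : 0 < u x₁ := by
    rcases lt_or_eq_of_le (hupos x₁) with h | h
    · exact h
    · exfalso
      have hz : ∀ y, g x₁ y = 0 := by
        intro y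
        simp only [hgdef, ← h, Real.zero_rpow hqpos.ne', zero_mul, zero_div]
      have : F x₁ = 0 := by
        simp only [hFdef]
        simp [hz]
      rw [this] at hx₁F
      linarith
  have hc₁ : 0 < u x₁ ^ q / ‖x₁‖ ^ α :=
    div_pos (rpow_pos_of_pos hux₁ q) (rpow_pos_of_pos (norm_pos_iff.2 hx₁0) α)
  have hker : Integrable (fun y => u y ^ q / (‖x₁ - y‖ ^ μ * ‖y‖ ^ α)) := by
    have h6 : Integrable (fun y => (u x₁ ^ q / ‖x₁‖ ^ α)⁻¹ * g x₁ y) := hgx₁.const_mul _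
    have h7 : (fun y => (u x₁ ^ q / ‖x₁‖ ^ α)⁻¹ * g x₁ y)
        = fun y => u y ^ q / (‖x₁ - y‖ ^ μ * ‖y‖ ^ α) := by
      funext y
      rw [hsplit x₁ y, ← mul_assoc, inv_mul_cancel₀ hc₁.ne', one_mul]
    rwa [h7] at h6
  -- measurability of the kernel
  have hkermeas : ∀ x : EuclideanSpace ℝ (Fin N),
      Measurable (fun y => u y ^ q / (‖x - y‖ ^ μ * ‖y‖ ^ α)) := by
    intro x
    exact (hum.pow measurable_const).div
      (((((measurable_const.sub measurable_id).norm).pow measurable_const)).mul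
        (measurable_norm.pow measurable_const))
  -- propagation of integrability
  have hprop : ∀ x : EuclideanSpace ℝ (Fin N), x ≠ 0 →
      Integrable (fun y => u y ^ q / (‖x - y‖ ^ μ * ‖y‖ ^ α)) := by
    intro x hx
    set δ := ‖x‖ / 2 with hδdef
    have hδ : 0 < δ := by
      have := norm_pos_iff.2 hx
      simp only [hδdef]
      linarith
    have hnear : IntegrableOn (fun y => u y ^ q / (‖x - y‖ ^ μ * ‖y‖ ^ α)) (ball x δ) := by
      have hCnn : 0 ≤ U δ ^ q / δ ^ α :=
        div_nonneg (rpow_nonneg (hU0 δ hδ) q) (rpow_nonneg hδ.le α)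
      have hbint : IntegrableOn
          (fun y => (U δ ^ q / δ ^ α) * ‖x - y‖ ^ (-μ)) (ball x δ) :=
        (aux_integrableOn_norm_sub_rpow volume μ δ hμ0.le (by rw [hfin]; exact hμN) hδ x).const_mul _
      refine Integrable.mono hbint ((hkermeas x).aestronglyMeasurable.restrict) ?_
      filter_upwards [ae_restrict_mem measurableSet_ball] with y hy
      have hyx : ‖y - x‖ < δ := by rwa [mem_ball, dist_eq_norm] at hy
      have hyn : δ ≤ ‖y‖ := by
        have h1 : ‖x‖ - ‖y‖ ≤ ‖x - y‖ := norm_sub_norm_le x y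
        have h2 : ‖x - y‖ = ‖y - x‖ := norm_sub_rev x y
        simp only [hδdef] at *
        linarith
      have hy0 : y ≠ 0 := by
        intro h
        rw [h] at hyn
        simp at hyn
        linarith
      have huy : u y ^ q ≤ U δ ^ q := by
        have h1 : u y = U ‖y‖ := hrad y hy0
        have h2 : U ‖y‖ ≤ U δ := hUmono δ ‖y‖ hδ hyn
        rw [h1]
        exact rpow_le_rpow (hU0 ‖y‖ (hδ.trans_le hyn)) h2 hqpos.le
      have hyα : δ ^ α ≤ ‖y‖ ^ α := rpow_le_rpow hδ.le hyn hα
      rw [Real.norm_eq_abs, Real.norm_eq_abs,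
        abs_of_nonneg (div_nonneg (rpow_nonneg (hupos y) q)
          (mul_nonneg (rpow_nonneg (norm_nonneg _) μ) (rpow_nonneg (norm_nonneg _) α))),
        abs_of_nonneg (mul_nonneg hCnn (rpow_nonneg (norm_nonneg _) (-μ)))]
      by_cases hyx0 : y = x
      · rw [hyx0]
        simp [Real.zero_rpow hμ0.ne', Real.zero_rpow (show -μ ≠ 0 by linarith)]
      · have hxy : 0 < ‖x - y‖ := by
          rw [norm_sub_rev]
          exact norm_pos_iff.2 (sub_ne_zero_of_ne hyx0)
        have hd1 : 0 < ‖x - y‖ ^ μ * δ ^ α :=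
          mul_pos (rpow_pos_of_pos hxy μ) (rpow_pos_of_pos hδ α)
        have hd2 : ‖x - y‖ ^ μ * δ ^ α ≤ ‖x - y‖ ^ μ * ‖y‖ ^ α :=
          mul_le_mul_of_nonneg_left hyα (rpow_nonneg (norm_nonneg _) μ)
        calc u y ^ q / (‖x - y‖ ^ μ * ‖y‖ ^ α)
            ≤ U δ ^ q / (‖x - y‖ ^ μ * δ ^ α) :=
              div_le_div₀ (rpow_nonneg (hU0 δ hδ) q) huy hd1 hd2
          _ = (U δ ^ q / δ ^ α) * ‖x - y‖ ^ (-μ) := by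
              rw [Real.rpow_neg (norm_nonneg _), mul_comm (‖x - y‖ ^ μ), ← div_div,
                div_eq_mul_inv]
    have hfar : IntegrableOn (fun y => u y ^ q / (‖x - y‖ ^ μ * ‖y‖ ^ α)) (ball x δ)ᶜ := by
      set M := (‖x₁ - x‖ + δ) / δ with hMdef
      have hM : 0 < M := div_pos (by positivity) hδ
      have hbint : Integrable (fun y => M ^ μ * (u y ^ q / (‖x₁ - y‖ ^ μ * ‖y‖ ^ α))) :=
        hker.const_mul _
      refine Integrable.mono hbint.integrableOn ((hkermeas x).aestronglyMeasurable.restrict) ?_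
      filter_upwards [ae_restrict_mem measurableSet_ball.compl,
        ae_restrict_of_ae (aene x₁), ae_restrict_of_ae (aene 0)] with y hy hyx₁ hy0
      have hyx : δ ≤ ‖y - x‖ := by
        simp only [mem_compl_iff, mem_ball, dist_eq_norm, not_lt] at hy
        exact hy
      have hxy : 0 < ‖x - y‖ := by
        rw [norm_sub_rev]; linarith
      have hx₁y : 0 < ‖x₁ - y‖ := by
        rw [norm_sub_rev]
        exact norm_pos_iff.2 (sub_ne_zero_of_ne hyx₁)
      have hkey : ‖x₁ - y‖ ≤ M * ‖x - y‖ := by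
        have h1 : ‖x₁ - y‖ ≤ ‖x₁ - x‖ + ‖x - y‖ := norm_sub_le_norm_sub_add_norm_sub x₁ x y
        have h2 : δ ≤ ‖x - y‖ := by rw [norm_sub_rev]; exact hyx
        have h3 : M * ‖x - y‖ = ‖x₁ - x‖ * (‖x - y‖ / δ) + ‖x - y‖ := by
          simp only [hMdef]; field_simp
        have h4 : 1 ≤ ‖x - y‖ / δ := (one_le_div hδ).2 h2
        nlinarith [norm_nonneg (x₁ - x)]
      have hkey2 : ‖x₁ - y‖ ^ μ ≤ M ^ μ * ‖x - y‖ ^ μ := by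
        rw [← mul_rpow hM.le (norm_nonneg _)]
        exact rpow_le_rpow (norm_nonneg _) hkey hμ0.le
      rw [Real.norm_eq_abs, Real.norm_eq_abs,
        abs_of_nonneg (div_nonneg (rpow_nonneg (hupos y) q)
          (mul_nonneg (rpow_nonneg (norm_nonneg _) μ) (rpow_nonneg (norm_nonneg _) α))),
        abs_of_nonneg (mul_nonneg (rpow_nonneg hM.le μ) (div_nonneg (rpow_nonneg (hupos y) q)
          (mul_nonneg (rpow_nonneg (norm_nonneg _) μ) (rpow_nonneg (norm_nonneg _) α))))]
      have hyα : 0 < ‖y‖ ^ α := rpow_pos_of_pos (norm_pos_iff.2 hy0) α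
      rw [div_le_iff₀ (mul_pos (rpow_pos_of_pos hxy μ) hyα), mul_comm (M ^ μ),
        div_mul_eq_mul_div, div_mul_eq_mul_div, le_div_iff₀ (mul_pos (rpow_pos_of_pos hx₁y μ) hyα)]
      have hunn : 0 ≤ u y ^ q := rpow_nonneg (hupos y) q
      nlinarith [mul_le_mul_of_nonneg_left hkey2 (mul_nonneg hunn hyα.le)]
    have := hnear.union hfar
    rw [union_compl_self] at this
    exact integrableOn_univ.1 this
  have hgint : ∀ x : EuclideanSpace ℝ (Fin N), x ≠ 0 → Integrable (fun y => g x y) := by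
    intro x hx
    have h1 : Integrable (fun y => (u x ^ q / ‖x‖ ^ α) * (u y ^ q / (‖x - y‖ ^ μ * ‖y‖ ^ α))) :=
      (hprop x hx).const_mul _
    have h2 : (fun y => g x y)
        = fun y => (u x ^ q / ‖x‖ ^ α) * (u y ^ q / (‖x - y‖ ^ μ * ‖y‖ ^ α)) := by
      funext y; exact hsplit x y
    rwa [h2]
  -- the set S and the integral J
  set S : Set (EuclideanSpace ℝ (Fin N)) := closedBall 0 R \ {0} with hSdef
  have hSmeas : MeasurableSet S := measurableSet_closedBall.diff (measurableSet_singleton 0)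
  have hIR : IntegrableOn (fun y : EuclideanSpace ℝ (Fin N) => ‖y‖ ^ (-α)) (closedBall 0 R) :=
    aux_integrableOn_norm_rpow volume α R hα (by rw [hfin]; exact hαN) hR
  have hI_S : IntegrableOn (fun y : EuclideanSpace ℝ (Fin N) => ‖y‖ ^ (-α)) S :=
    hIR.mono_set diff_subset
  set J : ℝ := ∫ y in closedBall (0 : EuclideanSpace ℝ (Fin N)) R, ‖y‖ ^ (-α) with hJdef
  have hJS : ∫ y in S, ‖y‖ ^ (-α) = J := by
    rw [hJdef]
    apply setIntegral_congr_set
    apply diff_ae_eq_self.2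
    exact measure_mono_null inter_subset_right (measure_singleton _)
  have hJval : J = ω * R ^ ((N:ℝ) - α) / ((N:ℝ) - α) := by
    rw [hJdef, aux_setIntegral_norm_rpow volume α R hα (by rw [hfin]; exact hαN) hR, hfin, hωval]
  have hJpos : 0 < J := by
    rw [hJval]
    have h1 : 0 < R ^ ((N:ℝ) - α) := rpow_pos_of_pos hR _
    have h2 : 0 < (N:ℝ) - α := by linarith
    positivity
  set k : ℝ := U R ^ q with hkdef
  have hk0 : 0 ≤ k := rpow_nonneg (hU0 R hR) q
  have hkle : ∀ x ∈ S, k ≤ u x ^ q := by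
    intro x hx
    obtain ⟨hx1, hx2⟩ := hx
    have hx0 : x ≠ 0 := by simpa using hx2
    have hxn : 0 < ‖x‖ := norm_pos_iff.2 hx0
    have hxR : ‖x‖ ≤ R := by simpa using hx1
    rw [hrad x hx0]
    exact rpow_le_rpow (hU0 R hR) (hUmono ‖x‖ R hxn hxR) hqpos.le
  have h2R : (0:ℝ) < (2*R) ^ μ := rpow_pos_of_pos (by linarith) μ
  -- lower bound for F on S
  have hFlow : ∀ x ∈ S, (k * k / ((2*R) ^ μ) * J) * ‖x‖ ^ (-α) ≤ F x := by
    intro x hx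
    obtain ⟨hx1, hx2⟩ := hx
    have hx0 : x ≠ 0 := by simpa using hx2
    have hxn : 0 < ‖x‖ := norm_pos_iff.2 hx0
    have hxR : ‖x‖ ≤ R := by simpa using hx1
    have step1 : ∫ y in S, (k * k / ((2*R) ^ μ) * ‖x‖ ^ (-α)) * ‖y‖ ^ (-α)
        ≤ ∫ y in S, g x y := by
      apply setIntegral_mono_ae_restrict (hI_S.const_mul _) ((hgint x hx0).integrableOn)
      filter_upwards [ae_restrict_mem hSmeas, ae_restrict_of_ae (aene x)] with y hyS hyx
      obtain ⟨hy1, hy2⟩ := hyS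
      have hy0 : y ≠ 0 := by simpa using hy2
      have hyn : 0 < ‖y‖ := norm_pos_iff.2 hy0
      have hyR : ‖y‖ ≤ R := by simpa using hy1
      have hxy : 0 < ‖x - y‖ := norm_pos_iff.2 (sub_ne_zero_of_ne (Ne.symm hyx))
      have hnum : k * k ≤ u x ^ q * u y ^ q :=
        mul_le_mul (hkle x ⟨hx1, hx2⟩) (hkle y ⟨hy1, hy2⟩) hk0 (rpow_nonneg (hupos x) q)
      have hden1 : 0 < ‖x‖ ^ α * ‖x - y‖ ^ μ * ‖y‖ ^ α :=
        mul_pos (mul_pos (rpow_pos_of_pos hxn α) (rpow_pos_of_pos hxy μ)) (rpow_pos_of_pos hyn α)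
      have hxyle : ‖x - y‖ ^ μ ≤ (2*R) ^ μ := by
        apply rpow_le_rpow (norm_nonneg _) _ hμ0.le
        calc ‖x - y‖ ≤ ‖x‖ + ‖y‖ := norm_sub_le x y
          _ ≤ 2 * R := by linarith
      have hden2 : ‖x‖ ^ α * ‖x - y‖ ^ μ * ‖y‖ ^ α ≤ ‖x‖ ^ α * (2*R) ^ μ * ‖y‖ ^ α := by
        apply mul_le_mul_of_nonneg_right _ (rpow_nonneg (norm_nonneg _) α)
        exact mul_le_mul_of_nonneg_left hxyle (rpow_nonneg (norm_nonneg _) α)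
      have heq : (k * k / ((2*R) ^ μ) * ‖x‖ ^ (-α)) * ‖y‖ ^ (-α)
          = k * k / (‖x‖ ^ α * (2*R) ^ μ * ‖y‖ ^ α) := by
        rw [Real.rpow_neg (norm_nonneg x), Real.rpow_neg (norm_nonneg y)]
        field_simp
      rw [heq]
      simp only [hgdef]
      exact div_le_div₀ (mul_nonneg (rpow_nonneg (hupos x) q) (rpow_nonneg (hupos y) q))
        hnum hden1 hden2
    have step2 : ∫ y in S, g x y ≤ F x := by
      simp only [hFdef]
      exact setIntegral_le_integral (hgint x hx0) (Filter.Eventually.of_forall (hgnonneg x))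
    have step0 : ∫ y in S, (k * k / ((2*R) ^ μ) * ‖x‖ ^ (-α)) * ‖y‖ ^ (-α)
        = (k * k / ((2*R) ^ μ) * ‖x‖ ^ (-α)) * J := by
      rw [MeasureTheory.integral_const_mul, hJS]
    have : (k * k / ((2*R) ^ μ) * J) * ‖x‖ ^ (-α)
        = (k * k / ((2*R) ^ μ) * ‖x‖ ^ (-α)) * J := by ring
    rw [this, ← step0]
    exact step1.trans step2
  -- main inequality
  have hmain : k * k / ((2*R) ^ μ) * J * J ≤ 1 := by
    have step1 : ∫ x in S, (k * k / ((2*R) ^ μ) * J) * ‖x‖ ^ (-α) ≤ ∫ x in S, F x :=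
      setIntegral_mono_on (hI_S.const_mul _) hFint.integrableOn hSmeas hFlow
    have step2 : ∫ x in S, F x ≤ 1 := by
      rw [← hnorm']
      exact setIntegral_le_integral hFint (Filter.Eventually.of_forall hFnonneg)
    have step0 : ∫ x in S, (k * k / ((2*R) ^ μ) * J) * ‖x‖ ^ (-α)
        = (k * k / ((2*R) ^ μ) * J) * J := by
      rw [MeasureTheory.integral_const_mul, hJS]
    calc k * k / ((2*R) ^ μ) * J * J = ∫ x in S, (k * k / ((2*R) ^ μ) * J) * ‖x‖ ^ (-α) := by
          rw [step0]
      _ ≤ ∫ x in S, F x := step1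
      _ ≤ 1 := step2
  -- final algebra
  have h7 : k * k * (J * J) ≤ (2*R) ^ μ := by
    rw [div_mul_eq_mul_div, div_mul_eq_mul_div, div_le_one h2R] at hmain
    calc k * k * (J * J) = k * k * J * J := by ring
      _ ≤ (2*R) ^ μ := hmain
  set D : ℝ := ((N : ℝ) - α) ^ (2 : ℕ) * 2 ^ μ / ω ^ (2 : ℕ) with hDdef
  have hNα : (0:ℝ) < (N:ℝ) - α := by linarith
  have hD0 : 0 < D := by
    rw [hDdef]
    have h2μ : (0:ℝ) < 2 ^ μ := rpow_pos_of_pos (by norm_num) μ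
    positivity
  have hRNα : (0:ℝ) < R ^ ((N:ℝ) - α) := rpow_pos_of_pos hR _
  have h8 : k * k ≤ D * R ^ (μ + 2*α - 2*(N:ℝ)) := by
    have e1 : R ^ μ * (R ^ ((N:ℝ)-α))⁻¹ * (R ^ ((N:ℝ)-α))⁻¹ = R ^ (μ + 2*α - 2*(N:ℝ)) := by
      rw [← Real.rpow_neg hR.le, ← Real.rpow_add hR, ← Real.rpow_add hR]
      congr 1
      ring
    have e2 : (2*R) ^ μ = 2 ^ μ * R ^ μ := mul_rpow (by norm_num) hR.le
    have e : D * R ^ (μ + 2*α - 2*(N:ℝ)) * (J * J) = (2*R) ^ μ := by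
      rw [← e1, e2, hJval, hDdef]
      field_simp
    have hJJ : 0 < J * J := mul_pos hJpos hJpos
    rw [← e] at h7
    exact le_of_mul_le_mul_right h7 hJJ
  -- conclude
  have hux₀ : u x₀ = U R := hrad x₀ hx₀
  rcases lt_or_eq_of_le (hU0 R hR) with hUR | hUR
  · have h2q : (0:ℝ) < 2 * q := by linarith
    have h9 : U R ^ (2*q) = k * k := by
      rw [hkdef, ← Real.rpow_add hUR]
      congr 1
      ring
    have h10 : U R ≤ (D * R ^ (μ + 2*α - 2*(N:ℝ))) ^ (1/(2*q)) := by
      have h11 : U R = (U R ^ (2*q)) ^ (1/(2*q)) := by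
        rw [← Real.rpow_mul hUR.le, mul_one_div, div_self h2q.ne', Real.rpow_one]
      rw [h11]
      apply rpow_le_rpow (rpow_nonneg hUR.le _) _ (by positivity)
      rw [h9]
      exact h8
    have h12 : (D * R ^ (μ + 2*α - 2*(N:ℝ))) ^ (1/(2*q))
        = D ^ (1/(2*q)) * R ^ (-(((N:ℝ) - 2)/2)) := by
      rw [mul_rpow hD0.le (rpow_nonneg hR.le _), ← Real.rpow_mul hR.le]
      congr 2
      rw [hq]
      have hq2 : (2 * ((2 * (N:ℝ) - 2 * α - μ) / ((N:ℝ) - 2))) ≠ 0 := by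
        apply mul_ne_zero (by norm_num)
        exact (div_pos hP hN2).ne'
      have hP' := hP.ne'
      field_simp
      ring_nf
      have hP'' : (-μ - α * 2 + (N:ℝ) * 2) ≠ 0 := by intro h; linarith
      linear_combination (-1:ℝ) * mul_inv_cancel₀ hP''
    rw [hux₀]
    rw [h12] at h10
    exact h10
  · rw [hux₀, ← hUR]
    have h2μ : (0:ℝ) < 2 ^ μ := rpow_pos_of_pos (by norm_num) μ
    positivity
end
end

section
/- Assume N ≥ 3 is an integer, α ≥ 0, 0 < μ < N and p > 1. Let (u,v) be a pair of positive solutions of the subcritical Bessel integral system whose defining identities hold for every x (with x ≠ 0 for the second equation) with convergent integrals. Then for every λ ∈ ℝ and every such x: u(x) − u(x^λ) = ∫_{Σ_λ} [ g_2(x-y) − g_2(x^λ-y) ] · [ v(y) u(y)^{p-1} − v(y^λ) u(y^λ)^{p-1} ] dy, and v(x) − v(x^λ) = ∫_{Σ_λ} { (1/|x-y|^μ) ( u(y)^p/(|x|^α |y|^α) − u(y^λ)^p/(|x^λ|^α |y^λ|^α) ) + (1/|x^λ-y|^μ) ( u(y^λ)^p/(|x|^α |y^λ|^α) − u(y)^p/(|x^λ|^α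 |y|^α) ) } dy. -/
open MeasureTheory ENNReal Real Filter Topology

noncomputable section

namespace BesselAux

variable {N : ℕ}

def reflLinear (i0 : Fin N) :
    EuclideanSpace ℝ (Fin N) →ₗ[ℝ] EuclideanSpace ℝ (Fin N) where
  toFun z := z - (2 * z i0) • EuclideanSpace.single i0 (1 : ℝ)
  map_add' a b := by
    dsimp only
    have h : (a + b) i0 = a i0 + b i0 := rfl
    rw [h]; module
  map_smul' c a := by
    dsimp only
    have h : (c • a) i0 = c * a i0 := rfl
    simp only [RingHom.id_apply, h]; module

lemma reflLinear_apply (i0 : Fin N) (z : EuclideanSpace ℝ (Fin N)) :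
    reflLinear i0 z = z - (2 * z i0) • EuclideanSpace.single i0 (1 : ℝ) := rfl

lemma reflLinear_coord (i0 i : Fin N) (z : EuclideanSpace ℝ (Fin N)) :
    reflLinear i0 z i = if i = i0 then -z i0 else z i := by
  rw [reflLinear_apply]
  have h1 : (z - (2 * z i0) • EuclideanSpace.single i0 (1 : ℝ)) i
      = z i - (2 * z i0) * (EuclideanSpace.single i0 (1 : ℝ)) i := rfl
  rw [h1, EuclideanSpace.single_apply]
  by_cases h : i = i0
  · subst h; simp; ring
  · simp [h]

lemma reflLinear_involutive (i0 : Fin N) : Function.Involutive (reflLinear i0) := by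
  intro z
  rw [reflLinear_apply (z := reflLinear i0 z), reflLinear_coord, if_pos rfl,
    reflLinear_apply]
  module

lemma reflLinear_norm (i0 : Fin N) (z : EuclideanSpace ℝ (Fin N)) :
    ‖reflLinear i0 z‖ = ‖z‖ := by
  rw [EuclideanSpace.norm_eq, EuclideanSpace.norm_eq]
  congr 1
  apply Finset.sum_congr rfl
  intro i _
  rw [reflLinear_coord]
  by_cases h : i = i0
  · subst h; simp
  · simp [h]

def reflIso (i0 : Fin N) :
    EuclideanSpace ℝ (Fin N) ≃ₗᵢ[ℝ] EuclideanSpace ℝ (Fin N) :=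
  { LinearEquiv.ofInvolutive (reflLinear i0) (reflLinear_involutive i0) with
    norm_map' := reflLinear_norm i0 }

lemma reflIso_apply (i0 : Fin N) (z : EuclideanSpace ℝ (Fin N)) :
    reflIso i0 z = z - (2 * z i0) • EuclideanSpace.single i0 (1 : ℝ) := rfl

end BesselAux
/-- **Reflection difference identities for the subcritical Bessel integral system**
`u(x) = ∫ g₂(x-y) v(y) u(y)^{p-1} dy`, `v(x) = ∫ u(y)^p/(|x|^α |x-y|^μ |y|^α) dy`, where
`g₂` is the Bessel kernel of order 2. With `x^λ` the reflection across `{x_1 = λ}` and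
`Σ_λ = {x : x_1 < λ}`, one has for all `λ` and `x`:
`u(x) − u(x^λ) = ∫_{Σ_λ} [g₂(x-y) − g₂(x^λ-y)][v(y)u(y)^{p-1} − v(y^λ)u(y^λ)^{p-1}] dy` and
(for `x, x^λ ≠ 0`) the corresponding identity for `v(x) − v(x^λ)`. -/
theorem bessel_system_reflection_identities
    (N : ℕ) (hN : 3 ≤ N) (α μ p : ℝ)
    (hα : 0 ≤ α) (hμ0 : 0 < μ) (hμN : μ < (N : ℝ)) (hp : 1 < p)
    -- `g2` is the Bessel kernel of order 2
    (g2 : EuclideanSpace ℝ (Fin N) → ℝ)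
    (hg2 : ∀ x, g2 x = (4 * π) ^ (-(N : ℝ) / 2) *
      ∫ t in Set.Ioi (0 : ℝ),
        Real.exp (-(π * ‖x‖ ^ (2 : ℕ) / t) - t / (4 * π)) * t ^ (-((N : ℝ) - 2) / 2 - 1))
    (u v : EuclideanSpace ℝ (Fin N) → ℝ)
    (hupos : ∀ x, 0 < u x) (hvpos : ∀ x, 0 < v x)
    (hint1 : ∀ x : EuclideanSpace ℝ (Fin N),
      Integrable (fun y => g2 (x - y) * v y * u y ^ (p - 1)) volume)
    (heq1 : ∀ x : EuclideanSpace ℝ (Fin N),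
      u x = ∫ y, g2 (x - y) * v y * u y ^ (p - 1))
    (hint2 : ∀ x : EuclideanSpace ℝ (Fin N), x ≠ 0 →
      Integrable (fun y => u y ^ p / (‖x‖ ^ α * ‖x - y‖ ^ μ * ‖y‖ ^ α)) volume)
    (heq2 : ∀ x : EuclideanSpace ℝ (Fin N), x ≠ 0 →
      v x = ∫ y, u y ^ p / (‖x‖ ^ α * ‖x - y‖ ^ μ * ‖y‖ ^ α))
    -- the reflection `x ↦ x^λ` across the hyperplane `{x : x_1 = λ}`
    (refl : ℝ → EuclideanSpace ℝ (Fin N) → EuclideanSpace ℝ (Fin N))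
    (hrefl : ∀ l x, refl l x =
      x + (2 * l - 2 * x ⟨0, by omega⟩) • EuclideanSpace.single (⟨0, by omega⟩ : Fin N) (1 : ℝ)) :
    ∀ l : ℝ, ∀ x : EuclideanSpace ℝ (Fin N),
      (u x - u (refl l x) =
        ∫ y in {y : EuclideanSpace ℝ (Fin N) | y ⟨0, by omega⟩ < l},
          (g2 (x - y) - g2 (refl l x - y)) *
          (v y * u y ^ (p - 1) - v (refl l y) * u (refl l y) ^ (p - 1))) ∧
      (x ≠ 0 → refl l x ≠ 0 →
        v x - v (refl l x) =
          ∫ y in {y : EuclideanSpace ℝ (Fin N) | y ⟨0, by omega⟩ < l},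
            (1 / ‖x - y‖ ^ μ) *
              (u y ^ p / (‖x‖ ^ α * ‖y‖ ^ α) -
                u (refl l y) ^ p / (‖refl l x‖ ^ α * ‖refl l y‖ ^ α)) +
            (1 / ‖refl l x - y‖ ^ μ) *
              (u (refl l y) ^ p / (‖x‖ ^ α * ‖refl l y‖ ^ α) -
                u y ^ p / (‖refl l x‖ ^ α * ‖y‖ ^ α))) := by
  intro l x
  set i0 : Fin N := ⟨0, by omega⟩ with hi0
  set ee : EuclideanSpace ℝ (Fin N) := EuclideanSpace.single i0 (1 : ℝ) with hee
  set L := BesselAux.reflIso i0 with hLdef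
  set S : Set (EuclideanSpace ℝ (Fin N)) := {y | y i0 < l} with hSdef
  -- reflection in terms of the linear isometry
  have hRz : ∀ z, refl l z = L z + (2 * l) • ee := by
    intro z
    rw [hrefl, hLdef, BesselAux.reflIso_apply, hee]
    module
  have hLcoord : ∀ (z : EuclideanSpace ℝ (Fin N)) (i : Fin N),
      L z i = if i = i0 then -z i0 else z i := fun z i => BesselAux.reflLinear_coord i0 i z
  have heecoord : ee i0 = 1 := by rw [hee, EuclideanSpace.single_apply, if_pos rfl]
  have hRcoord : ∀ z, refl l z i0 = 2 * l - z i0 := by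
    intro z
    rw [hRz]
    have h1 : (L z + (2 * l) • ee) i0 = L z i0 + (2 * l) * ee i0 := rfl
    rw [h1, hLcoord, if_pos rfl, heecoord]
    ring
  have hLee : L ee = -ee := by
    rw [hLdef, BesselAux.reflIso_apply, heecoord, ← hee]
    module
  have hLinv : ∀ z, L (L z) = z := fun z => BesselAux.reflLinear_involutive i0 z
  have hinv : ∀ z, refl l (refl l z) = z := by
    intro z
    rw [hRz (refl l z), hRz z, map_add, _root_.map_smul, hLee, hLinv]
    module
  have hnorm1 : ∀ a b, ‖refl l a - refl l b‖ = ‖a - b‖ := by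
    intro a b
    rw [hRz, hRz]
    have h1 : L a + (2 * l) • ee - (L b + (2 * l) • ee) = L (a - b) := by
      rw [map_sub]; abel
    rw [h1, L.norm_map]
  have hnorm2 : ∀ a b, ‖refl l a - b‖ = ‖a - refl l b‖ := by
    intro a b
    have h := hnorm1 a (refl l b)
    rw [hinv b] at h
    exact h
  have hg2n : ∀ a b, ‖a‖ = ‖b‖ → g2 a = g2 b := by
    intro a b h; rw [hg2, hg2, h]
  -- measure-theoretic facts
  have hMP : MeasurePreserving (refl l) volume volume := by
    have h0 : MeasurePreserving (fun z => L z + (2 * l) • ee) volume volume :=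
      (measurePreserving_add_right volume _).comp L.measurePreserving
    have h1 : refl l = fun z => L z + (2 * l) • ee := funext hRz
    rw [h1]; exact h0
  have hmeas : Measurable (refl l) := hMP.measurable
  have hME : MeasurableEmbedding (refl l) :=
    (⟨⟨refl l, refl l, hinv, hinv⟩, hmeas, hmeas⟩ :
      (EuclideanSpace ℝ (Fin N)) ≃ᵐ (EuclideanSpace ℝ (Fin N))).measurableEmbedding
  have hcoordMeas : Measurable fun y : EuclideanSpace ℝ (Fin N) => y i0 :=
    (EuclideanSpace.proj i0).continuous.measurable
  have hSmeas : MeasurableSet S := measurableSet_lt hcoordMeas measurable_const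
  have hnull : volume {y : EuclideanSpace ℝ (Fin N) | y i0 = l} = 0 := by
    set K : Submodule ℝ (EuclideanSpace ℝ (Fin N)) :=
      LinearMap.ker ((EuclideanSpace.proj i0 : StrongDual ℝ (EuclideanSpace ℝ (Fin N))) : EuclideanSpace ℝ (Fin N) →ₗ[ℝ] ℝ) with hK
    have hKne : K ≠ ⊤ := by
      intro h
      have hmem : ee ∈ K := h.symm ▸ Submodule.mem_top
      have h2 : ((EuclideanSpace.proj i0 : StrongDual ℝ (EuclideanSpace ℝ (Fin N))) : EuclideanSpace ℝ (Fin N) →ₗ[ℝ] ℝ) ee = 0 := LinearMap.mem_ker.mp hmem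
      have h3 : ((EuclideanSpace.proj i0 : StrongDual ℝ (EuclideanSpace ℝ (Fin N))) : EuclideanSpace ℝ (Fin N) →ₗ[ℝ] ℝ) ee = (1 : ℝ) := heecoord
      rw [h2] at h3
      exact one_ne_zero h3.symm
    have hset : {y : EuclideanSpace ℝ (Fin N) | y i0 = l} =
        (fun y => y + (-(l • ee))) ⁻¹' (K : Set (EuclideanSpace ℝ (Fin N))) := by
      ext y
      simp only [Set.mem_setOf_eq, Set.mem_preimage, SetLike.mem_coe, hK, LinearMap.mem_ker]
      have h4 : ((EuclideanSpace.proj i0 : StrongDual ℝ (EuclideanSpace ℝ (Fin N))) : EuclideanSpace ℝ (Fin N) →ₗ[ℝ] ℝ) (y + -(l • ee)) = y i0 + -(l * ee i0) := rfl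
      rw [h4, heecoord, mul_one]
      constructor <;> intro h <;> linarith
    rw [hset, measure_preimage_add_right]
    exact Measure.addHaar_submodule volume K hKne
  -- the splitting identity
  have hsplit : ∀ f : EuclideanSpace ℝ (Fin N) → ℝ, Integrable f volume →
      ∫ y, f y = ∫ y in S, (f y + f (refl l y)) := by
    intro f hf
    have hcomp : Integrable (fun y => f (refl l y)) volume :=
      (hMP.integrable_comp_emb hME).mpr hf
    have h1 : ∫ y, f y = (∫ y in S, f y) + ∫ y in Sᶜ, f y :=
      (integral_add_compl hSmeas hf).symm
    have hae : Sᶜ =ᵐ[volume] {y : EuclideanSpace ℝ (Fin N) | l < y i0} := by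
      refine ae_eq_set.mpr ?_
      constructor
      · apply measure_mono_null _ hnull
        intro y hy
        simp only [hSdef, Set.mem_diff, Set.mem_compl_iff, Set.mem_setOf_eq] at hy ⊢
        linarith [le_antisymm (le_of_not_gt hy.1) (le_of_not_gt hy.2)]
      · apply measure_mono_null _ hnull
        intro y hy
        have h2 : y ∈ S := Set.notMem_compl_iff.mp hy.2
        have h3 : y i0 < l := h2
        have h4 : l < y i0 := hy.1
        exact absurd h3 (not_lt.mpr (le_of_lt h4))
    have h2 : ∫ y in Sᶜ, f y = ∫ y in {y : EuclideanSpace ℝ (Fin N) | l < y i0}, f y :=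
      setIntegral_congr_set hae
    have hpre : {y : EuclideanSpace ℝ (Fin N) | l < y i0} = refl l ⁻¹' S := by
      ext y
      simp only [hSdef, Set.mem_setOf_eq, Set.mem_preimage]
      rw [hRcoord y]
      constructor <;> intro h <;> linarith
    have h3 : ∫ y in refl l ⁻¹' S, f y = ∫ y in S, f (refl l y) := by
      have hcg : ∀ z, f z = (fun y => f (refl l y)) (refl l z) := by
        intro z; simp only []; rw [hinv]
      calc ∫ y in refl l ⁻¹' S, f y
          = ∫ y in refl l ⁻¹' S, (fun w => f (refl l w)) (refl l y) := by
            apply integral_congr_ae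
            exact ae_of_all _ fun y => hcg y
        _ = ∫ y in S, f (refl l y) :=
            hMP.setIntegral_preimage_emb hME (fun w => f (refl l w)) S
    rw [h1, h2, hpre, h3, ← integral_add hf.integrableOn hcomp.integrableOn]
  constructor
  · -- first identity
    have hfx := hint1 x
    have hfrx := hint1 (refl l x)
    have hcompx : Integrable (fun y => g2 (x - refl l y) * v (refl l y) * u (refl l y) ^ (p - 1))
        volume := (hMP.integrable_comp_emb hME).mpr hfx
    have hcomprx : Integrable
        (fun y => g2 (refl l x - refl l y) * v (refl l y) * u (refl l y) ^ (p - 1)) volume :=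
      (hMP.integrable_comp_emb hME).mpr hfrx
    have e1 : u x = ∫ y in S,
        (g2 (x - y) * v y * u y ^ (p - 1)
          + g2 (x - refl l y) * v (refl l y) * u (refl l y) ^ (p - 1)) :=
      (heq1 x).trans (hsplit _ hfx)
    have e2 : u (refl l x) = ∫ y in S,
        (g2 (refl l x - y) * v y * u y ^ (p - 1)
          + g2 (refl l x - refl l y) * v (refl l y) * u (refl l y) ^ (p - 1)) :=
      (heq1 _).trans (hsplit _ hfrx)
    have hA : IntegrableOn (fun y =>
        g2 (x - y) * v y * u y ^ (p - 1)
          + g2 (x - refl l y) * v (refl l y) * u (refl l y) ^ (p - 1)) S volume :=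
      (hfx.add hcompx).integrableOn
    have hB : IntegrableOn (fun y =>
        g2 (refl l x - y) * v y * u y ^ (p - 1)
          + g2 (refl l x - refl l y) * v (refl l y) * u (refl l y) ^ (p - 1)) S volume :=
      (hfrx.add hcomprx).integrableOn
    rw [e1, e2, ← integral_sub hA hB]
    apply integral_congr_ae
    apply ae_of_all
    intro y
    have n1 : g2 (x - refl l y) = g2 (refl l x - y) := hg2n _ _ (hnorm2 x y).symm
    have n2 : g2 (refl l x - refl l y) = g2 (x - y) := hg2n _ _ (hnorm1 x y)
    simp only []
    rw [n1, n2]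
    ring
  · -- second identity
    intro hx hrx
    have hfx := hint2 x hx
    have hfrx := hint2 (refl l x) hrx
    have hcompx : Integrable (fun y =>
        u (refl l y) ^ p / (‖x‖ ^ α * ‖x - refl l y‖ ^ μ * ‖refl l y‖ ^ α)) volume :=
      (hMP.integrable_comp_emb hME).mpr hfx
    have hcomprx : Integrable (fun y =>
        u (refl l y) ^ p / (‖refl l x‖ ^ α * ‖refl l x - refl l y‖ ^ μ * ‖refl l y‖ ^ α))
        volume := (hMP.integrable_comp_emb hME).mpr hfrx
    have e1 : v x = ∫ y in S,
        (u y ^ p / (‖x‖ ^ α * ‖x - y‖ ^ μ * ‖y‖ ^ α)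
          + u (refl l y) ^ p / (‖x‖ ^ α * ‖x - refl l y‖ ^ μ * ‖refl l y‖ ^ α)) :=
      (heq2 x hx).trans (hsplit _ hfx)
    have e2 : v (refl l x) = ∫ y in S,
        (u y ^ p / (‖refl l x‖ ^ α * ‖refl l x - y‖ ^ μ * ‖y‖ ^ α)
          + u (refl l y) ^ p / (‖refl l x‖ ^ α * ‖refl l x - refl l y‖ ^ μ * ‖refl l y‖ ^ α)) :=
      (heq2 _ hrx).trans (hsplit _ hfrx)
    have hA : IntegrableOn (fun y =>
        u y ^ p / (‖x‖ ^ α * ‖x - y‖ ^ μ * ‖y‖ ^ α)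
          + u (refl l y) ^ p / (‖x‖ ^ α * ‖x - refl l y‖ ^ μ * ‖refl l y‖ ^ α)) S volume :=
      (hfx.add hcompx).integrableOn
    have hB : IntegrableOn (fun y =>
        u y ^ p / (‖refl l x‖ ^ α * ‖refl l x - y‖ ^ μ * ‖y‖ ^ α)
          + u (refl l y) ^ p / (‖refl l x‖ ^ α * ‖refl l x - refl l y‖ ^ μ * ‖refl l y‖ ^ α))
        S volume := (hfrx.add hcomprx).integrableOn
    rw [e1, e2, ← integral_sub hA hB]
    apply integral_congr_ae
    apply ae_of_all
    intro y
    have n1 : ‖x - refl l y‖ = ‖refl l x - y‖ := (hnorm2 x y).symm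
    have n2 : ‖refl l x - refl l y‖ = ‖x - y‖ := hnorm1 x y
    simp only []
    rw [n1, n2]
    ring
end
end
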